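/- Let a < b, let f : ℝ → ℝ be continuous, let c₀ > 0, K > 0, ε₀ > 0 and p ∈ [1,∞), and set α := 1 − 1/p. Then there exists C > 0 such that the following holds: whenever ε ∈ (0,ε₀) and g : [a,b] → ℝ is twice continuously differentiable with |g''(u) − f(u)| ≤ c₀ (g'(u)² + ε) for all u ∈ [a,b] and ∫ₐᵇ g'(u)² du ≤ K, then (∫ₐᵇ |g''(u)|^p du)^{1/p} ≤ C, sup_{u∈[a,b]} |g'(u)| ≤ C, and |g'(u) − g'(v)| ≤ C |u − v|^α for all u, v ∈ [a,b]. -/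

import Mathlib

open Set MeasureTheory

-- auxiliary: x ≤ D * x^α for 0 ≤ x ≤ D, 1 ≤ D, 0 ≤ α ≤ 1
lemma aux_le_rpow (D x α : ℝ) (hD : 1 ≤ D) (hx0 : 0 ≤ x) (hxD : x ≤ D)
    (hα0 : 0 ≤ α) (hα1 : α ≤ 1) : x ≤ D * x ^ α := by
  rcases eq_or_lt_of_le hx0 with h | h
  · have : (0:ℝ) ≤ D * x ^ α := mul_nonneg (by linarith) (Real.rpow_nonneg hx0 α)
    linarith
  · have hx : x = x ^ α * x ^ (1 - α) := by
      rw [← Real.rpow_add h]; ring_nf; rw [Real.rpow_one]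
    have h2 : x ^ (1 - α) ≤ D := by
      rcases le_total x 1 with hx1 | hx1
      · exact le_trans (Real.rpow_le_one hx0 hx1 (by linarith)) hD
      · calc x ^ (1 - α) ≤ x ^ (1:ℝ) :=
              Real.rpow_le_rpow_of_exponent_le hx1 (by linarith)
          _ = x := Real.rpow_one x
          _ ≤ D := hxD
    calc x = x ^ α * x ^ (1 - α) := hx
      _ ≤ x ^ α * D := by
          exact mul_le_mul_of_nonneg_left h2 (Real.rpow_nonneg hx0 α)
      _ = D * x ^ α := by ring

set_option maxHeartbeats 1000000 in
/-- Lemma 2.7 (higher regularity bounds): given `c₀, K, ε₀ > 0` and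
`p ∈ [1,∞)`, with `α = 1 - 1/p`, there is `C > 0` such that any `C²` function
`g` on `[a,b]` with `|g'' - f| ≤ c₀ (g'² + ε)` for some `ε ∈ (0,ε₀)` and
`∫ₐᵇ g'² ≤ K` satisfies `‖g''‖_{L^p} ≤ C`, `sup |g'| ≤ C`, and `g'` is
`α`-Hölder continuous with constant `C`. -/
theorem lem_higher_regularity (a b : ℝ) (hab : a < b) (f : ℝ → ℝ)
    (hf : Continuous f) (c₀ K ε₀ : ℝ) (hc₀ : 0 < c₀) (hK : 0 < K) (hε₀ : 0 < ε₀)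
    (p : ℝ) (hp : 1 ≤ p) :
    ∃ C : ℝ, 0 < C ∧
      ∀ ε : ℝ, 0 < ε → ε < ε₀ →
      ∀ g g' g'' : ℝ → ℝ,
        (∀ u ∈ Set.Icc a b, HasDerivWithinAt g (g' u) (Set.Icc a b) u) →
        (∀ u ∈ Set.Icc a b, HasDerivWithinAt g' (g'' u) (Set.Icc a b) u) →
        ContinuousOn g'' (Set.Icc a b) →
        (∀ u ∈ Set.Icc a b, |g'' u - f u| ≤ c₀ * ((g' u) ^ 2 + ε)) →
        (∫ u in a..b, (g' u) ^ 2) ≤ K →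
        (∫ u in a..b, |g'' u| ^ p) ^ (1/p) ≤ C ∧
        (∀ u ∈ Set.Icc a b, |g' u| ≤ C) ∧
        (∀ u ∈ Set.Icc a b, ∀ v ∈ Set.Icc a b,
          |g' u - g' v| ≤ C * |u - v| ^ (1 - 1/p)) := by
  have hba : (0:ℝ) < b - a := by linarith
  have hp0 : (0:ℝ) < p := by linarith
  obtain ⟨M₀, hM₀⟩ := isCompact_Icc.exists_bound_of_continuousOn
    (hf.continuousOn : ContinuousOn f (Icc a b))
  set M := max M₀ 0 with hMdef
  have hM : ∀ u ∈ Icc a b, |f u| ≤ M := fun u hu =>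
    le_trans (by simpa [Real.norm_eq_abs] using hM₀ u hu) (le_max_left _ _)
  have hM0 : (0:ℝ) ≤ M := le_max_right _ _
  set I := (M + c₀*ε₀)*(b-a) + c₀*K with hIdef
  have hI0 : 0 < I := by positivity
  set C₁ := ((b-a)+K)/(2*(b-a)) + I with hC₁def
  have hC₁0 : 0 < C₁ := by positivity
  set C₂ := M + c₀*(C₁^2 + ε₀) with hC₂def
  have hC₂0 : 0 < C₂ := by positivity
  set D := max 1 (b-a) with hDdef
  have hD1 : (1:ℝ) ≤ D := le_max_left _ _
  have hD0 : (0:ℝ) < D := by linarith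
  have hDb : b - a ≤ D := le_max_right _ _
  clear_value M I C₁ C₂ D
  refine ⟨C₂ * D + C₁ + 1, by nlinarith [mul_pos hC₂0 hD0], ?_⟩
  intro ε hε hεε₀ g g' g'' hg hg' hg''cont hode hintK
  have hg'cont : ContinuousOn g' (Icc a b) := fun u hu => (hg' u hu).continuousWithinAt
  have huIcc : uIcc a b = Icc a b := uIcc_of_le hab.le
  have hg'sq_int : IntervalIntegrable (fun u => (g' u)^2) volume a b :=
    ((hg'cont.pow 2).mono huIcc.subset).intervalIntegrable
  have habs_int : IntervalIntegrable (fun u => |g'' u|) volume a b :=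
    (hg''cont.abs.mono huIcc.subset).intervalIntegrable
  have hg''_int : IntervalIntegrable g'' volume a b :=
    (hg''cont.mono huIcc.subset).intervalIntegrable
  -- pointwise bound on |g''| via g'²
  have hptw : ∀ u ∈ Icc a b, |g'' u| ≤ M + c₀*ε₀ + c₀ * (g' u)^2 := by
    intro u hu
    have h1 := hode u hu
    have h2 := hM u hu
    have h3 : |g'' u| ≤ |g'' u - f u| + |f u| := by
      have := abs_sub_abs_le_abs_sub (g'' u) (f u); have := abs_add_le (g'' u - f u) (f u)
      calc |g'' u| = |(g'' u - f u) + f u| := by ring_nf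
        _ ≤ |g'' u - f u| + |f u| := abs_add_le _ _
    nlinarith [sq_nonneg (g' u)]
  -- ∫ |g''| ≤ I
  have hIbound : (∫ u in a..b, |g'' u|) ≤ I := by
    have hmono : (∫ u in a..b, |g'' u|) ≤ ∫ u in a..b, (M + c₀*ε₀ + c₀ * (g' u)^2) :=
      intervalIntegral.integral_mono_on hab.le habs_int
        ((intervalIntegrable_const).add (hg'sq_int.const_mul c₀)) hptw
    have hcalc : (∫ u in a..b, (M + c₀*ε₀ + c₀ * (g' u)^2))
        = (M + c₀*ε₀) * (b - a) + c₀ * ∫ u in a..b, (g' u)^2 := by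
      rw [intervalIntegral.integral_add (intervalIntegrable_const) (hg'sq_int.const_mul c₀),
        intervalIntegral.integral_const_mul, intervalIntegral.integral_const]
      simp [smul_eq_mul, mul_comm]
    rw [hcalc] at hmono
    have : c₀ * (∫ u in a..b, (g' u)^2) ≤ c₀ * K :=
      mul_le_mul_of_nonneg_left hintK hc₀.le
    rw [hIdef]; linarith
  -- FTC
  have hFTC : ∀ v ∈ Icc a b, ∀ u ∈ Icc a b, v ≤ u →
      (∫ t in v..u, g'' t) = g' u - g' v := by
    intro v hv u hu hvu
    refine intervalIntegral.integral_eq_sub_of_hasDeriv_right_of_le hvu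
      (hg'cont.mono (Icc_subset_Icc hv.1 hu.2)) ?_
      (hg''_int.mono_set (by rw [huIcc, uIcc_of_le hvu]; exact Icc_subset_Icc hv.1 hu.2))
    intro x hx
    have hx' : x ∈ Ioo a b := ⟨lt_of_le_of_lt hv.1 hx.1, lt_of_lt_of_le hx.2 hu.2⟩
    exact ((hg' x (Ioo_subset_Icc_self hx')).hasDerivAt
      (Icc_mem_nhds hx'.1 hx'.2)).hasDerivWithinAt
  -- |g' u - g' v| ≤ ∫ |g''| (one-sided then symmetric)
  have hsub' : ∀ v ∈ Icc a b, ∀ u ∈ Icc a b, v ≤ u →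
      |g' u - g' v| ≤ ∫ t in a..b, |g'' t| := by
    intro v hv u hu hvu
    calc |g' u - g' v| = |∫ t in v..u, g'' t| := by rw [hFTC v hv u hu hvu]
      _ ≤ ∫ t in v..u, |g'' t| := intervalIntegral.abs_integral_le_integral_abs hvu
      _ ≤ ∫ t in a..b, |g'' t| :=
          intervalIntegral.integral_mono_interval hv.1 hvu hu.2
            (Filter.Eventually.of_forall fun t => abs_nonneg _) habs_int
  have hsub : ∀ u ∈ Icc a b, ∀ v ∈ Icc a b,
      |g' u - g' v| ≤ ∫ t in a..b, |g'' t| := by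
    intro u hu v hv
    rcases le_total v u with h | h
    · exact hsub' v hv u hu h
    · rw [abs_sub_comm]; exact hsub' u hu v hv h
  -- sup bound
  have hsup : ∀ u ∈ Icc a b, |g' u| ≤ C₁ := by
    intro u hu
    have key : ∀ v ∈ Icc a b, |g' u| - I ≤ |g' v| := by
      intro v hv
      have h1 := hsub u hu v hv
      have h2 := abs_sub_abs_le_abs_sub (g' u) (g' v)
      linarith
    have habs'_int : IntervalIntegrable (fun v => |g' v|) volume a b :=
      (hg'cont.abs.mono huIcc.subset).intervalIntegrable
    have hintlow : (|g' u| - I) * (b - a) ≤ ∫ v in a..b, |g' v| := by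
      have := intervalIntegral.integral_mono_on hab.le (intervalIntegrable_const)
        habs'_int key
      rwa [intervalIntegral.integral_const, smul_eq_mul, mul_comm] at this
    have hinthigh : (∫ v in a..b, |g' v|) ≤ ((b-a) + K) / 2 := by
      have hm : (∫ v in a..b, |g' v|) ≤ ∫ v in a..b, (1 + (g' v)^2)/2 := by
        refine intervalIntegral.integral_mono_on hab.le habs'_int
          (((intervalIntegrable_const).add hg'sq_int).div_const 2) ?_
        intro v hv
        nlinarith [sq_nonneg (|g' v| - 1), sq_abs (g' v), abs_nonneg (g' v)]
      have hc : (∫ v in a..b, (1 + (g' v)^2)/2)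
          = ((b - a) + ∫ v in a..b, (g' v)^2) / 2 := by
        rw [intervalIntegral.integral_div,
          intervalIntegral.integral_add (intervalIntegrable_const) hg'sq_int,
          intervalIntegral.integral_const]
        simp [smul_eq_mul]
      rw [hc] at hm
      linarith
    have hQ : (((b-a)+K)/(2*(b-a))) * (b - a) = ((b-a)+K)/2 := by
      field_simp
    have : (|g' u| - I) * (b - a) ≤ (((b-a)+K)/(2*(b-a))) * (b - a) := by
      rw [hQ]; linarith
    have h4 : |g' u| - I ≤ ((b-a)+K)/(2*(b-a)) := le_of_mul_le_mul_right this hba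
    rw [hC₁def]; linarith
  -- pointwise C₂ bound on |g''|
  have hC₂pt : ∀ u ∈ Icc a b, |g'' u| ≤ C₂ := by
    intro u hu
    have h1 := hode u hu
    have h2 := hM u hu
    have h3 : |g'' u| ≤ |g'' u - f u| + |f u| := by
      calc |g'' u| = |(g'' u - f u) + f u| := by ring_nf
        _ ≤ |g'' u - f u| + |f u| := abs_add_le _ _
    have h4 : (g' u)^2 ≤ C₁^2 := by
      have := hsup u hu
      nlinarith [abs_nonneg (g' u), sq_abs (g' u)]
    have h5 : c₀ * ((g' u)^2 + ε) ≤ c₀ * (C₁^2 + ε₀) :=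
      mul_le_mul_of_nonneg_left (by linarith) hc₀.le
    rw [hC₂def]; linarith
  refine ⟨?_, ?_, ?_⟩
  · -- Lp bound
    have hrp_int : IntervalIntegrable (fun u => |g'' u| ^ p) volume a b := by
      refine (ContinuousOn.mono ?_ huIcc.subset).intervalIntegrable
      exact hg''cont.abs.rpow_const (fun u hu => Or.inr hp0.le)
    have hnn : 0 ≤ ∫ u in a..b, |g'' u| ^ p :=
      intervalIntegral.integral_nonneg hab.le
        (fun u hu => Real.rpow_nonneg (abs_nonneg _) p)
    have hb1 : (∫ u in a..b, |g'' u| ^ p) ≤ C₂ ^ p * (b - a) := by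
      have := intervalIntegral.integral_mono_on (f := fun u => |g'' u| ^ p)
        (g := fun _ => C₂ ^ p) hab.le hrp_int (intervalIntegrable_const)
        (fun u hu => Real.rpow_le_rpow (abs_nonneg _) (hC₂pt u hu) hp0.le)
      rwa [intervalIntegral.integral_const, smul_eq_mul, mul_comm] at this
    have hD2 : (b - a) ^ (1/p) ≤ D := by
      calc (b - a) ^ (1/p) ≤ D ^ (1/p) :=
            Real.rpow_le_rpow hba.le hDb (by positivity)
        _ ≤ D ^ (1:ℝ) :=
            Real.rpow_le_rpow_of_exponent_le hD1
              (by rw [div_le_one hp0]; linarith)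
        _ = D := Real.rpow_one D
    have hpinv : p * (1/p) = 1 := by field_simp
    calc (∫ u in a..b, |g'' u| ^ p) ^ (1/p)
        ≤ (C₂ ^ p * (b - a)) ^ (1/p) := Real.rpow_le_rpow hnn hb1 (by positivity)
      _ = C₂ * (b - a) ^ (1/p) := by
          rw [Real.mul_rpow (Real.rpow_nonneg hC₂0.le p) hba.le,
            ← Real.rpow_mul hC₂0.le, hpinv, Real.rpow_one]
      _ ≤ C₂ * D := mul_le_mul_of_nonneg_left hD2 hC₂0.le
      _ ≤ C₂ * D + C₁ + 1 := by linarith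
  · -- sup bound
    intro u hu
    have h1 := hsup u hu
    have h2 := mul_pos hC₂0 hD0
    linarith
  · -- Hölder bound
    intro u hu v hv
    have hlin' : ∀ v ∈ Icc a b, ∀ u ∈ Icc a b, v ≤ u →
        |g' u - g' v| ≤ C₂ * |u - v| := by
      intro v hv u hu hvu
      have habs : |u - v| = u - v := abs_of_nonneg (by linarith)
      calc |g' u - g' v| = |∫ t in v..u, g'' t| := by rw [hFTC v hv u hu hvu]
        _ ≤ ∫ t in v..u, |g'' t| := intervalIntegral.abs_integral_le_integral_abs hvu
        _ ≤ ∫ _t in v..u, C₂ := by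
            refine intervalIntegral.integral_mono_on hvu
              (habs_int.mono_set (by rw [huIcc, uIcc_of_le hvu]; exact Icc_subset_Icc hv.1 hu.2))
              (intervalIntegrable_const) ?_
            exact fun t ht => hC₂pt t ⟨le_trans hv.1 ht.1, le_trans ht.2 hu.2⟩
        _ = C₂ * |u - v| := by
            rw [intervalIntegral.integral_const, smul_eq_mul, habs, mul_comm]
    have hlin : |g' u - g' v| ≤ C₂ * |u - v| := by
      rcases le_total v u with h | h
      · exact hlin' v hv u hu h
      · rw [abs_sub_comm (g' u) (g' v), abs_sub_comm u v]; exact hlin' u hu v hv h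
    have hx0 : (0:ℝ) ≤ |u - v| := abs_nonneg _
    have hxD : |u - v| ≤ D := by
      have : |u - v| ≤ b - a := by
        rw [abs_sub_le_iff]
        exact ⟨by linarith [hu.2, hv.1], by linarith [hv.2, hu.1]⟩
      exact le_trans this hDb
    have hα0 : (0:ℝ) ≤ 1 - 1/p := by
      have : 1/p ≤ 1 := by rw [div_le_one hp0]; linarith
      linarith
    have hα1 : (1:ℝ) - 1/p ≤ 1 := by have : (0:ℝ) ≤ 1/p := by positivity
                                     linarith
    have haux := aux_le_rpow D |u - v| (1 - 1/p) hD1 hx0 hxD hα0 hα1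
    have hrnn : (0:ℝ) ≤ |u - v| ^ (1 - 1/p) := Real.rpow_nonneg hx0 _
    calc |g' u - g' v| ≤ C₂ * |u - v| := hlin
      _ ≤ C₂ * (D * |u - v| ^ (1 - 1/p)) := mul_le_mul_of_nonneg_left haux hC₂0.le
      _ ≤ (C₂ * D + C₁ + 1) * |u - v| ^ (1 - 1/p) := by nlinarith
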